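/- Define m_k recursively from positive reals z_1,...,z_n by the Skibinsky triangular array: g_{i,j}=0 for i>j, g_{0,j}=1, g_{i,j}=g_{i,j-1}+z_{j-i+1}·g_{i-1,j} for 1≤i≤j, and m_k = g_{k,k}. Then m_k, viewed as a polynomial function of (z_1,...,z_k), satisfies ∂m_k/∂z_k = z_1·z_2⋯z_{k-1} (with the convention that the empty product equals 1). -/

import Mathlib

/-- Let `g` be the Skibinsky triangular array associated with recursion variables
`z₁, z₂, …`: `g i j z = 0` for `i > j`, `g 0 j z = 1`, and
`g i j z = g i (j-1) z + z (j-i+1) * g (i-1) j z` for `1 ≤ i ≤ j`, and let `m k = g k k` be the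
`k`-th moment, a polynomial function of `(z₁, …, z_k)`. Then for positive recursion variables,
`∂ m_k / ∂ z_k = z₁ ⋯ z_{k-1}` (empty product equal to 1). -/
theorem stmt_4 (g : ℕ → ℕ → (ℕ → ℝ) → ℝ)
    (h_zero : ∀ i j z, j < i → g i j z = 0)
    (h_top : ∀ j z, g 0 j z = 1)
    (h_rec : ∀ i j : ℕ, ∀ z : ℕ → ℝ, 1 ≤ i → i ≤ j →
      g i j z = g i (j - 1) z + z (j - i + 1) * g (i - 1) j z) :
    ∀ k : ℕ, 1 ≤ k → ∀ z : ℕ → ℝ, (∀ i, 0 < z i) →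
      HasDerivAt (fun t => g k k (Function.update z k t))
        (∏ i ∈ Finset.Icc 1 (k - 1), z i) (z k) := by
  -- g i j only depends on the variables z m with m ≤ j
  have indep : ∀ j i (z z' : ℕ → ℝ), (∀ m, m ≤ j → z m = z' m) → g i j z = g i j z' := by
    intro j
    induction j using Nat.strong_induction_on with
    | _ j ih =>
      intro i
      induction i with
      | zero => intro z z' _; rw [h_top, h_top]
      | succ i ih2 =>
        intro z z' hzz
        rcases lt_or_ge j (i+1) with h | h
        · rw [h_zero _ _ _ h, h_zero _ _ _ h]
        · rw [h_rec (i+1) j z (by omega) h, h_rec (i+1) j z' (by omega) h]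
          have h1 : g (i+1) (j-1) z = g (i+1) (j-1) z' :=
            ih (j-1) (by omega) _ z z' (fun m hm => hzz m (by omega))
          simp only [Nat.add_sub_cancel]
          rw [h1, ih2 z z' hzz, hzz (j - (i+1) + 1) (by omega)]
  intro k hk z hz
  have key : ∀ i, 1 ≤ i → i ≤ k →
      HasDerivAt (fun t => g i k (Function.update z k t))
        (∏ m ∈ Finset.Icc (k - i + 1) (k - 1), z m) (z k) := by
    intro i
    induction i with
    | zero => intro h; omega
    | succ i ih =>
      intro _ hik
      rcases Nat.eq_zero_or_pos i with hi | hi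
      · subst hi
        have hfun : (fun t => g 1 k (Function.update z k t))
            = (fun t => g 1 (k-1) z + t) := by
          funext t
          rw [h_rec 1 k _ le_rfl hk, h_top]
          have hkk : k - 1 + 1 = k := by omega
          rw [hkk, mul_one, Function.update_self]
          congr 1
          exact indep (k-1) 1 _ z (fun m hm => Function.update_of_ne (by omega) _ _)
        have hD : HasDerivAt (fun t => g 1 (k-1) z + t) 1 (z k) :=
          (hasDerivAt_id _).const_add _
        have heq : (∏ m ∈ Finset.Icc (k - 1 + 1) (k - 1), z m) = 1 := by
          rw [Finset.Icc_eq_empty (by omega), Finset.prod_empty]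
        rw [hfun, heq]
        exact hD
      · have hfun : (fun t => g (i+1) k (Function.update z k t))
            = (fun t => g (i+1) (k-1) z + z (k - i) * g i k (Function.update z k t)) := by
          funext t
          rw [h_rec (i+1) k _ (by omega) hik]
          have h1 : g (i+1) (k-1) (Function.update z k t) = g (i+1) (k-1) z :=
            indep (k-1) (i+1) _ z (fun m hm => Function.update_of_ne (by omega) _ _)
          have h2 : k - (i+1) + 1 = k - i := by omega
          simp only [Nat.add_sub_cancel]
          rw [h1, h2, Function.update_of_ne (by omega)]
        have hD : HasDerivAt
            (fun t => g (i+1) (k-1) z + z (k - i) * g i k (Function.update z k t))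
            (z (k - i) * ∏ m ∈ Finset.Icc (k - i + 1) (k - 1), z m) (z k) :=
          ((ih hi (by omega)).const_mul _).const_add _
        have heq : (∏ m ∈ Finset.Icc (k - (i+1) + 1) (k - 1), z m)
            = z (k - i) * ∏ m ∈ Finset.Icc (k - i + 1) (k - 1), z m := by
          have h2 : k - (i+1) + 1 = k - i := by omega
          rw [h2, Finset.Icc_eq_cons_Ioc (by omega : k - i ≤ k - 1), Finset.prod_cons,
            ← Finset.Icc_add_one_left_eq_Ioc]
        rw [hfun, heq]
        exact hD
  have := key k hk le_rfl
  have h0 : k - k + 1 = 1 := by omega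
  rwa [h0] at this
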